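/- For a < 0 < b and x ∈ (a,b) \ {0}, the Szegő function D(z) = z^α · φ((2z-a-b)/(b-a))^{-α} satisfies the jump relation D₊(x)·D₋(x) = |x|^{2α}, where D₊ and D₋ are boundary values from the upper and lower half-planes and φ(z) = z + √(z-1)√(z+1). -/

import Mathlib

open Complex Filter Topology

noncomputable def wfun (a b : ℝ) (z : ℂ) : ℂ := (2 * z - a - b) / ((b : ℂ) - a)

noncomputable def Pfun (a b : ℝ) (z : ℂ) : ℂ :=
  wfun a b z + (wfun a b z - 1) ^ ((1 : ℂ) / 2) * (wfun a b z + 1) ^ ((1 : ℂ) / 2)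

noncomputable def Ffun (α a b : ℝ) (z : ℂ) : ℂ := z ^ (α : ℂ) * Pfun a b z ^ (-(α : ℂ))

lemma arg_ne_pi_of_im_pos {u : ℂ} (hu : 0 < u.im) : u.arg ≠ Real.pi := fun h =>
  hu.ne' (Complex.arg_eq_pi_iff.1 h).2

lemma sqrt_re_im_pos {u : ℂ} (hu : 0 < u.im) :
    0 < (u ^ ((1 : ℂ) / 2)).re ∧ 0 < (u ^ ((1 : ℂ) / 2)).im := by
  have hne : u ≠ 0 := by intro h; rw [h] at hu; simp at hu
  have harg0 : 0 < u.arg := by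
    rcases lt_or_eq_of_le (Complex.arg_nonneg_iff.2 hu.le) with h | h
    · exact h
    · exact absurd (Complex.arg_eq_zero_iff.1 h.symm).2 hu.ne'
  have hargpi : u.arg < Real.pi := lt_of_le_of_ne (Complex.arg_le_pi u) (arg_ne_pi_of_im_pos hu)
  rw [Complex.cpow_def_of_ne_zero hne]
  have h1 : (Complex.log u * ((1 : ℂ) / 2)).re = (Complex.log u).re / 2 := by
    simp [Complex.mul_re]
    ring
  have h2 : (Complex.log u * ((1 : ℂ) / 2)).im = u.arg / 2 := by
    simp [Complex.mul_im, Complex.log_im]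
    ring
  rw [Complex.exp_re, Complex.exp_im, h1, h2]
  have hpi := Real.pi_pos
  constructor
  · exact mul_pos (Real.exp_pos _)
      (Real.cos_pos_of_mem_Ioo ⟨by linarith, by linarith⟩)
  · exact mul_pos (Real.exp_pos _)
      (Real.sin_pos_of_pos_of_lt_pi (by linarith) (by linarith))

lemma wfun_im (a b : ℝ) (z : ℂ) :
    (wfun a b z).im = 2 * z.im / (b - a) := by
  rw [wfun]
  have h : ((b : ℂ) - a) = ((b - a : ℝ) : ℂ) := by push_cast; ring
  rw [h, Complex.div_ofReal_im]
  simp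

lemma wfun_im_pos {a b : ℝ} (hab : a < b) {z : ℂ} (hz : 0 < z.im) :
    0 < (wfun a b z).im := by
  rw [wfun_im a b]
  exact div_pos (by linarith) (by linarith)

lemma Pfun_im_pos {a b : ℝ} (hab : a < b) {z : ℂ} (hz : 0 < z.im) :
    0 < (Pfun a b z).im := by
  have hw := wfun_im_pos hab hz
  have h1 : 0 < (wfun a b z - 1).im := by simpa using hw
  have h2 : 0 < (wfun a b z + 1).im := by simpa using hw
  have s1 := sqrt_re_im_pos h1
  have s2 := sqrt_re_im_pos h2
  rw [Pfun, Complex.add_im, Complex.mul_im]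
  have g1 := mul_pos s1.1 s2.2
  have g2 := mul_pos s1.2 s2.1
  linarith

lemma conj_symmetry {a b : ℝ} (α : ℝ) (hab : a < b) {z : ℂ} (hz : 0 < z.im) :
    Ffun α a b z = (starRingEnd ℂ) (Ffun α a b ((starRingEnd ℂ) z)) := by
  have hwc : wfun a b ((starRingEnd ℂ) z) = (starRingEnd ℂ) (wfun a b z) := by
    rw [wfun, wfun, map_div₀, map_sub, map_sub, map_mul, map_ofNat, Complex.conj_ofReal,
      Complex.conj_ofReal, map_sub, Complex.conj_ofReal, Complex.conj_ofReal]
  have hw := wfun_im_pos hab hz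
  have h1 : 0 < (wfun a b z - 1).im := by simpa using hw
  have h2 : 0 < (wfun a b z + 1).im := by simpa using hw
  have chalf : (starRingEnd ℂ) ((1 : ℂ) / 2) = (1 : ℂ) / 2 := by
    rw [map_div₀, map_one, map_ofNat]
  have hb1 : wfun a b ((starRingEnd ℂ) z) - 1 = (starRingEnd ℂ) (wfun a b z - 1) := by
    rw [hwc, map_sub, map_one]
  have hb2 : wfun a b ((starRingEnd ℂ) z) + 1 = (starRingEnd ℂ) (wfun a b z + 1) := by
    rw [hwc, map_add, map_one]
  have hs1 : (wfun a b ((starRingEnd ℂ) z) - 1) ^ ((1 : ℂ) / 2)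
      = (starRingEnd ℂ) ((wfun a b z - 1) ^ ((1 : ℂ) / 2)) := by
    rw [hb1, Complex.conj_cpow _ _ (arg_ne_pi_of_im_pos h1), chalf]
  have hs2 : (wfun a b ((starRingEnd ℂ) z) + 1) ^ ((1 : ℂ) / 2)
      = (starRingEnd ℂ) ((wfun a b z + 1) ^ ((1 : ℂ) / 2)) := by
    rw [hb2, Complex.conj_cpow _ _ (arg_ne_pi_of_im_pos h2), chalf]
  have hP : Pfun a b ((starRingEnd ℂ) z) = (starRingEnd ℂ) (Pfun a b z) := by
    rw [Pfun, Pfun, hs1, hs2, hwc, ← map_mul, ← map_add]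
  have hPa : (Pfun a b z).arg ≠ Real.pi := arg_ne_pi_of_im_pos (Pfun_im_pos hab hz)
  have hza : z.arg ≠ Real.pi := arg_ne_pi_of_im_pos hz
  rw [Ffun, Ffun, hP, map_mul, Complex.conj_cpow _ _ hza, Complex.conj_cpow _ _ hPa,
    Complex.conj_conj, Complex.conj_conj, Complex.conj_ofReal, map_neg, Complex.conj_ofReal]

lemma wfun_real {a b : ℝ} (hab : a < b) (x : ℝ) :
    wfun a b (x : ℂ) = (((2 * x - a - b) / (b - a) : ℝ) : ℂ) := by
  rw [wfun]
  have h : ((b : ℂ) - a) = ((b - a : ℝ) : ℂ) := by push_cast; ring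
  have h2 : (2 * (x : ℂ) - a - b) = ((2 * x - a - b : ℝ) : ℂ) := by push_cast; ring
  rw [h, h2, ← Complex.ofReal_div]

lemma wfun_continuous (a b : ℝ) : Continuous (wfun a b) := by
  unfold wfun
  exact (((continuous_const.mul continuous_id).sub continuous_const).sub
    continuous_const).div_const _

lemma Pfun_tendsto {a b x : ℝ} (hax : a < x) (hxb : x < b) :
    ∃ L : ℂ, ‖L‖ = 1 ∧
      Tendsto (Pfun a b) (𝓝[{z : ℂ | 0 < z.im}] (x : ℂ)) (𝓝 L) := by
  have hab : a < b := lt_trans hax hxb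
  set w₀ : ℝ := (2 * x - a - b) / (b - a) with hw₀
  have hba : (0 : ℝ) < b - a := by linarith
  have hw₀1 : w₀ < 1 := by
    rw [hw₀, div_lt_one hba]; linarith
  have hw₀2 : -1 < w₀ := by
    rw [hw₀, lt_div_iff₀ hba]; linarith
  have hwx : wfun a b (x : ℂ) = ((w₀ : ℝ) : ℂ) := wfun_real hab x
  have hcw := wfun_continuous a b
  -- tendsto of wfun within upper half-plane
  have htw : Tendsto (wfun a b) (𝓝[{z : ℂ | 0 < z.im}] (x : ℂ))
      (𝓝[{z : ℂ | 0 < z.im}] ((w₀ : ℝ) : ℂ)) := by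
    have h : Tendsto (wfun a b) (𝓝[{z : ℂ | 0 < z.im}] (x : ℂ))
        (𝓝[{z : ℂ | 0 < z.im}] (wfun a b (x : ℂ))) :=
      ContinuousWithinAt.tendsto_nhdsWithin (hcw.continuousWithinAt)
        (fun z hz => wfun_im_pos hab hz)
    rwa [hwx] at h
  -- branch 1 : (w - 1) ^ (1/2)
  have hsub : Tendsto (fun u : ℂ => u - 1) (𝓝[{z : ℂ | 0 < z.im}] ((w₀ : ℝ) : ℂ))
      (𝓝[{z : ℂ | 0 ≤ z.im}] (((w₀ - 1 : ℝ)) : ℂ)) := by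
    have h : ((w₀ - 1 : ℝ) : ℂ) = ((w₀ : ℝ) : ℂ) - 1 := by push_cast; ring
    rw [h]
    exact ContinuousWithinAt.tendsto_nhdsWithin
      ((continuous_id.sub continuous_const).continuousWithinAt)
      (fun u hu => by
        simp only [Set.mem_setOf_eq] at hu ⊢
        simp [le_of_lt hu])
  have h1 : Tendsto (fun z : ℂ => wfun a b z - 1) (𝓝[{z : ℂ | 0 < z.im}] (x : ℂ))
      (𝓝[{z : ℂ | 0 ≤ z.im}] (((w₀ - 1 : ℝ)) : ℂ)) := hsub.comp htw
  have hre : (((w₀ - 1 : ℝ)) : ℂ).re < 0 := by simp; linarith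
  have him : (((w₀ - 1 : ℝ)) : ℂ).im = 0 := by simp
  have htlog := Complex.tendsto_log_nhdsWithin_im_nonneg_of_re_neg_of_im_zero hre him
  have habs1 : ‖(((w₀ - 1 : ℝ)) : ℂ)‖ = 1 - w₀ := by
    rw [Complex.norm_real, Real.norm_eq_abs, abs_of_neg (by linarith)]; ring
  rw [habs1] at htlog
  have hexp : Tendsto (fun u : ℂ => Complex.exp (u * (1 / 2)))
      (𝓝 ((Real.log (1 - w₀) : ℂ) + Real.pi * I))
      (𝓝 (Complex.exp (((Real.log (1 - w₀) : ℂ) + Real.pi * I) * (1 / 2)))) :=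
    (Complex.continuous_exp.comp (continuous_id.mul continuous_const)).tendsto _
  have hE1' : Tendsto (fun z : ℂ => Complex.exp (Complex.log (wfun a b z - 1) * (1 / 2)))
      (𝓝[{z : ℂ | 0 < z.im}] (x : ℂ))
      (𝓝 (Complex.exp (((Real.log (1 - w₀) : ℂ) + Real.pi * I) * (1 / 2)))) :=
    hexp.comp (htlog.comp h1)
  have hE1 : Tendsto (fun z : ℂ => (wfun a b z - 1) ^ ((1 : ℂ) / 2))
      (𝓝[{z : ℂ | 0 < z.im}] (x : ℂ))
      (𝓝 (Complex.exp (((Real.log (1 - w₀) : ℂ) + Real.pi * I) * (1 / 2)))) := by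
    refine hE1'.congr' ?_
    filter_upwards [self_mem_nhdsWithin] with z hz
    have : wfun a b z - 1 ≠ 0 := by
      intro h0
      have := wfun_im_pos hab (hz : 0 < z.im)
      rw [show wfun a b z = 1 by linear_combination h0] at this
      simp at this
    rw [Complex.cpow_def_of_ne_zero this]
  have hE1v : Complex.exp (((Real.log (1 - w₀) : ℂ) + Real.pi * I) * (1 / 2))
      = ((Real.sqrt (1 - w₀) : ℝ) : ℂ) * I := by
    rw [add_mul, Complex.exp_add]
    congr 1
    · rw [show ((Real.log (1 - w₀) : ℂ) * (1 / 2)) = ((Real.log (1 - w₀) * (1 / 2) : ℝ) : ℂ) by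
        push_cast; ring, ← Complex.ofReal_exp]
      norm_cast
      rw [Real.sqrt_eq_rpow, Real.rpow_def_of_pos (by linarith)]
    · rw [show (Real.pi : ℂ) * I * (1 / 2) = ((Real.pi : ℂ) / 2) * I by ring,
        Complex.exp_mul_I]
      have : ((Real.pi : ℂ) / 2) = ((Real.pi / 2 : ℝ) : ℂ) := by push_cast; ring
      rw [this, ← Complex.ofReal_cos, ← Complex.ofReal_sin,
        Real.cos_pi_div_two, Real.sin_pi_div_two]
      simp
  rw [hE1v] at hE1
  -- branch 2 : (w + 1) ^ (1/2)
  have hmem : ((w₀ : ℝ) : ℂ) + 1 ∈ Complex.slitPlane := by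
    rw [Complex.mem_slitPlane_iff]
    left; simp; linarith
  have hwt : Tendsto (wfun a b) (𝓝 (x : ℂ)) (𝓝 ((w₀ : ℝ) : ℂ)) := by
    have := hcw.continuousAt (x := (x : ℂ))
    rwa [ContinuousAt, hwx] at this
  have hE2' : Tendsto (fun z : ℂ => (wfun a b z + 1) ^ ((1 : ℂ) / 2))
      (𝓝[{z : ℂ | 0 < z.im}] (x : ℂ)) (𝓝 ((((w₀ : ℝ) : ℂ) + 1) ^ ((1 : ℂ) / 2))) := by
    have hadd : Tendsto (fun z : ℂ => wfun a b z + 1) (𝓝 (x : ℂ)) (𝓝 (((w₀ : ℝ) : ℂ) + 1)) :=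
      hwt.add tendsto_const_nhds
    exact ((continuousAt_cpow_const hmem).tendsto.comp hadd).mono_left nhdsWithin_le_nhds
  have hE2v : (((w₀ : ℝ) : ℂ) + 1) ^ ((1 : ℂ) / 2) = ((Real.sqrt (1 + w₀) : ℝ) : ℂ) := by
    rw [show (((w₀ : ℝ) : ℂ) + 1) = ((1 + w₀ : ℝ) : ℂ) by push_cast; ring,
      show ((1 : ℂ) / 2) = (((1 / 2 : ℝ) : ℝ) : ℂ) by push_cast; ring,
      ← Complex.ofReal_cpow (by linarith), Real.sqrt_eq_rpow]
  rw [hE2v] at hE2'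
  -- combine
  have htw0 : Tendsto (wfun a b) (𝓝[{z : ℂ | 0 < z.im}] (x : ℂ)) (𝓝 ((w₀ : ℝ) : ℂ)) :=
    hwt.mono_left nhdsWithin_le_nhds
  refine ⟨((w₀ : ℝ) : ℂ) + ((Real.sqrt (1 - w₀) : ℝ) : ℂ) * I * ((Real.sqrt (1 + w₀) : ℝ) : ℂ),
    ?_, htw0.add (hE1.mul hE2')⟩
  have hL : ((w₀ : ℝ) : ℂ) + ((Real.sqrt (1 - w₀) : ℝ) : ℂ) * I * ((Real.sqrt (1 + w₀) : ℝ) : ℂ)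
      = ((w₀ : ℝ) : ℂ) + ((Real.sqrt (1 - w₀) * Real.sqrt (1 + w₀) : ℝ) : ℂ) * I := by
    push_cast; ring
  rw [hL, Complex.norm_def, Complex.normSq_add_mul_I, mul_pow,
    Real.sq_sqrt (by linarith), Real.sq_sqrt (by linarith),
    show w₀ ^ 2 + (1 - w₀) * (1 + w₀) = 1 by ring, Real.sqrt_one]


/-- The Szegő function `D(z) = z^α · φ((2z-a-b)/(b-a))^{-α}` satisfies the jump
relation `D₊(x) D₋(x) = |x|^{2α}` for `x ∈ (a,b) \ {0}`. -/
theorem szego_function_jump (α a b : ℝ) (hα : -1 / 2 < α) (ha : a < 0) (hb : 0 < b)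
    (x : ℝ) (hx : x ∈ Set.Ioo a b) (hx0 : x ≠ 0) (Dp Dm : ℂ)
    (hDp : Tendsto
      (fun z : ℂ => z ^ (α : ℂ) *
        (((2 * z - a - b) / (b - a)) +
          ((2 * z - a - b) / (b - a) - 1) ^ ((1 : ℂ) / 2) *
          ((2 * z - a - b) / (b - a) + 1) ^ ((1 : ℂ) / 2)) ^ (-(α : ℂ)))
      (𝓝[{z : ℂ | 0 < z.im}] (x : ℂ)) (𝓝 Dp))
    (hDm : Tendsto
      (fun z : ℂ => z ^ (α : ℂ) *
        (((2 * z - a - b) / (b - a)) +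
          ((2 * z - a - b) / (b - a) - 1) ^ ((1 : ℂ) / 2) *
          ((2 * z - a - b) / (b - a) + 1) ^ ((1 : ℂ) / 2)) ^ (-(α : ℂ)))
      (𝓝[{z : ℂ | z.im < 0}] (x : ℂ)) (𝓝 Dm)) :
    Dp * Dm = ((|x| ^ (2 * α) : ℝ) : ℂ) := by
  obtain ⟨hax, hxb⟩ := hx
  have hab : a < b := lt_trans hax hxb
  have hDp' : Tendsto (Ffun α a b) (𝓝[{z : ℂ | 0 < z.im}] (x : ℂ)) (𝓝 Dp) := hDp
  have hDm' : Tendsto (Ffun α a b) (𝓝[{z : ℂ | z.im < 0}] (x : ℂ)) (𝓝 Dm) := hDm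
  haveI hne : (𝓝[{z : ℂ | 0 < z.im}] (x : ℂ)).NeBot := by
    rw [← mem_closure_iff_nhdsWithin_neBot, Complex.closure_setOf_lt_im]
    simp
  have hmap : Tendsto (fun z : ℂ => (starRingEnd ℂ) z) (𝓝[{z : ℂ | 0 < z.im}] (x : ℂ))
      (𝓝[{z : ℂ | z.im < 0}] (x : ℂ)) := by
    have h : Tendsto (fun z : ℂ => (starRingEnd ℂ) z) (𝓝[{z : ℂ | 0 < z.im}] (x : ℂ))
        (𝓝[{z : ℂ | z.im < 0}] ((starRingEnd ℂ) (x : ℂ))) :=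
      ContinuousWithinAt.tendsto_nhdsWithin
        (Complex.continuous_conj.continuousWithinAt)
        (fun z hz => by
          simp only [Set.mem_setOf_eq, Complex.conj_im] at hz ⊢
          linarith)
    rwa [Complex.conj_ofReal] at h
  have h2 : Tendsto (fun z : ℂ => (starRingEnd ℂ) (Ffun α a b ((starRingEnd ℂ) z)))
      (𝓝[{z : ℂ | 0 < z.im}] (x : ℂ)) (𝓝 ((starRingEnd ℂ) Dm)) :=
    (Complex.continuous_conj.tendsto Dm).comp (hDm'.comp hmap)
  have h3 : Tendsto (Ffun α a b) (𝓝[{z : ℂ | 0 < z.im}] (x : ℂ))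
      (𝓝 ((starRingEnd ℂ) Dm)) := by
    refine h2.congr' ?_
    filter_upwards [self_mem_nhdsWithin] with z hz
    exact (conj_symmetry α hab (hz : 0 < z.im)).symm
  have hDpc : Dp = (starRingEnd ℂ) Dm := tendsto_nhds_unique hDp' h3
  obtain ⟨L, hL1, hLt⟩ := Pfun_tendsto hax hxb
  have habsf : Tendsto (fun z : ℂ => ‖Ffun α a b z‖)
      (𝓝[{z : ℂ | 0 < z.im}] (x : ℂ)) (𝓝 (|x| ^ α)) := by
    have t1 : Tendsto (fun z : ℂ => ‖z‖) (𝓝[{z : ℂ | 0 < z.im}] (x : ℂ))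
        (𝓝 |x|) := by
      have h := (continuous_norm.tendsto ((x : ℂ))).mono_left
        (nhdsWithin_le_nhds (s := {z : ℂ | 0 < z.im}))
      rwa [Complex.norm_real, Real.norm_eq_abs] at h
    have t1' : Tendsto (fun z : ℂ => ‖z‖ ^ α)
        (𝓝[{z : ℂ | 0 < z.im}] (x : ℂ)) (𝓝 (|x| ^ α)) :=
      t1.rpow_const (Or.inl (abs_ne_zero.2 hx0))
    have t2 : Tendsto (fun z : ℂ => ‖Pfun a b z‖)
        (𝓝[{z : ℂ | 0 < z.im}] (x : ℂ)) (𝓝 1) := by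
      have h := (continuous_norm.tendsto L).comp hLt
      rwa [hL1] at h
    have t2' : Tendsto (fun z : ℂ => ‖Pfun a b z‖ ^ (-α))
        (𝓝[{z : ℂ | 0 < z.im}] (x : ℂ)) (𝓝 1) := by
      have h := t2.rpow_const (p := -α) (Or.inl one_ne_zero)
      rwa [Real.one_rpow] at h
    have hmul := t1'.mul t2'
    rw [mul_one] at hmul
    refine hmul.congr' ?_
    filter_upwards [self_mem_nhdsWithin] with z hz
    rw [Ffun, norm_mul, ← Complex.ofReal_neg, Complex.norm_cpow_real, Complex.norm_cpow_real]
  have habsDp : ‖Dp‖ = |x| ^ α :=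
    tendsto_nhds_unique ((continuous_norm.tendsto Dp).comp hDp') habsf
  have habsDm : ‖Dm‖ = |x| ^ α := by
    rw [hDpc, Complex.norm_conj] at habsDp
    exact habsDp
  have key : Dp * Dm = ((‖Dm‖ ^ 2 : ℝ) : ℂ) := by
    rw [hDpc, mul_comm, Complex.mul_conj, Complex.normSq_eq_norm_sq]
  rw [key, habsDm]
  norm_cast
  rw [← Real.rpow_natCast (|x| ^ α) 2, ← Real.rpow_mul (abs_nonneg x)]
  norm_num [mul_comm]
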